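/- Let X be a real random variable and let c > 0. Then the law of X satisfies condition (TO) if and only if the law of c·X satisfies condition (TO). -/

import Mathlib

open MeasureTheory Set

/-- The denominator in condition (TO): `1 + ∫_0^x ∫_y^∞ μ((−∞,−z]) dz dy`. -/
noncomputable def TOden (μ : Measure ℝ) (x : ℝ) : ENNReal :=
  1 + ∫⁻ y in Ioc (0 : ℝ) x, ∫⁻ z in Ioi y, μ (Iic (-z))

/-- A Borel measure `μ` on `ℝ` satisfies condition (TO) at level `κ > 0` if
`∫_κ^∞ x·μ([x,∞)) / (1 + ∫_0^x ∫_y^∞ μ((−∞,−z]) dz dy) dx < ∞`; the `ENNReal`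
division is `0` whenever the denominator is infinite. -/
def TOat (μ : Measure ℝ) (κ : ℝ) : Prop :=
  (∫⁻ x in Ioi κ, (ENNReal.ofReal x * μ (Ici x)) / TOden μ x) < ⊤

/-- `μ` satisfies condition (TO) if it satisfies (TO) at some level `κ > 0`. -/
def TO (μ : Measure ℝ) : Prop := ∃ κ > (0 : ℝ), TOat μ κ

/-- Change of variables `x = c t` for set Lebesgue integrals. -/
lemma lintegral_scale (c : ℝ) (hc : 0 < c) (f : ℝ → ENNReal) (s : Set ℝ)
    (hs : MeasurableSet s) :
    ∫⁻ x in s, f x = ENNReal.ofReal c * ∫⁻ t in (fun t => c * t) ⁻¹' s, f (c * t) := by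
  have he : MeasurableEmbedding (fun t : ℝ => c * t) :=
    (Homeomorph.mulLeft₀ c hc.ne').measurableEmbedding
  conv_lhs => rw [← Real.smul_map_volume_mul_left hc.ne', abs_of_pos hc]
  rw [Measure.restrict_smul, lintegral_smul_measure,
    Measure.restrict_map he.measurable hs, he.lintegral_map, smul_eq_mul]

/-- Main helper: condition (TO) is preserved under scaling by a positive constant. -/
lemma TO_map_const_mul (μ : Measure ℝ) (c : ℝ) (hc : 0 < c) (h : TO μ) :
    TO (μ.map (fun x => c * x)) := by
  obtain ⟨κ, hκ, hTO⟩ := h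
  set ν := μ.map (fun x => c * x) with hν
  have hmeas : Measurable (fun x : ℝ => c * x) := measurable_const_mul c
  have hνIci : ∀ x : ℝ, ν (Ici x) = μ (Ici (x / c)) := by
    intro x
    rw [hν, Measure.map_apply hmeas measurableSet_Ici, preimage_const_mul_Ici₀ _ hc]
  have hνIic : ∀ x : ℝ, ν (Iic x) = μ (Iic (x / c)) := by
    intro x
    rw [hν, Measure.map_apply hmeas measurableSet_Iic, preimage_const_mul_Iic₀ _ hc]
  -- inner integral scaling
  have hinner : ∀ y : ℝ, (∫⁻ z in Ioi y, ν (Iic (-z)))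
      = ENNReal.ofReal c * ∫⁻ w in Ioi (y / c), μ (Iic (-w)) := by
    intro y
    calc ∫⁻ z in Ioi y, ν (Iic (-z)) = ∫⁻ z in Ioi y, μ (Iic (-z / c)) := by
          simp only [hνIic, neg_div]
      _ = ENNReal.ofReal c * ∫⁻ w in (fun t => c * t) ⁻¹' Ioi y, μ (Iic (-(c * w) / c)) :=
          lintegral_scale c hc (fun z => μ (Iic (-z / c))) _ measurableSet_Ioi
      _ = ENNReal.ofReal c * ∫⁻ w in Ioi (y / c), μ (Iic (-w)) := by
          rw [preimage_const_mul_Ioi₀ _ hc]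
          congr 1
          refine lintegral_congr fun w => ?_
          rw [neg_div, mul_div_cancel_left₀ _ hc.ne']
  -- denominator scaling
  have hden : ∀ x : ℝ, TOden ν x
      = 1 + ENNReal.ofReal c * (ENNReal.ofReal c *
        ∫⁻ y in Ioc (0 : ℝ) (x / c), ∫⁻ z in Ioi y, μ (Iic (-z))) := by
    intro x
    rw [TOden]
    congr 1
    calc (∫⁻ y in Ioc (0:ℝ) x, ∫⁻ z in Ioi y, ν (Iic (-z)))
        = ∫⁻ y in Ioc (0:ℝ) x, ENNReal.ofReal c * ∫⁻ w in Ioi (y / c), μ (Iic (-w)) := by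
          exact lintegral_congr fun y => hinner y
      _ = ENNReal.ofReal c * ∫⁻ y in Ioc (0:ℝ) x, ∫⁻ w in Ioi (y / c), μ (Iic (-w)) :=
          lintegral_const_mul' _ _ ENNReal.ofReal_ne_top
      _ = ENNReal.ofReal c * (ENNReal.ofReal c *
            ∫⁻ t in (fun t => c * t) ⁻¹' Ioc (0:ℝ) x, ∫⁻ w in Ioi (c * t / c), μ (Iic (-w))) := by
          rw [← lintegral_scale c hc (fun y => ∫⁻ w in Ioi (y / c), μ (Iic (-w))) _
            measurableSet_Ioc]
      _ = ENNReal.ofReal c * (ENNReal.ofReal c *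
            ∫⁻ y in Ioc (0:ℝ) (x / c), ∫⁻ z in Ioi y, μ (Iic (-z))) := by
          rw [preimage_const_mul_Ioc₀ _ _ hc, zero_div]
          congr 2
          refine lintegral_congr fun t => ?_
          rw [mul_div_cancel_left₀ _ hc.ne']
  -- the constant
  set m : ENNReal := ENNReal.ofReal (min 1 (c * c)) with hm
  have hm0 : m ≠ 0 := by
    rw [hm]
    simp only [ne_eq, ENNReal.ofReal_eq_zero, not_le]
    exact lt_min one_pos (mul_pos hc hc)
  have hmtop : m ≠ ⊤ := ENNReal.ofReal_ne_top
  have hm1 : m ≤ 1 := by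
    rw [hm, ← ENNReal.ofReal_one]
    exact ENNReal.ofReal_le_ofReal (min_le_left _ _)
  have hmcc : m ≤ ENNReal.ofReal c * ENNReal.ofReal c := by
    rw [hm, ← ENNReal.ofReal_mul hc.le]
    exact ENNReal.ofReal_le_ofReal (min_le_right _ _)
  -- denominator lower bound
  have hden_ge : ∀ x : ℝ, m * TOden μ (x / c) ≤ TOden ν x := by
    intro x
    rw [hden x, TOden, mul_add, mul_one, ← mul_assoc]
    exact add_le_add hm1 (mul_le_mul_left hmcc _)
  refine ⟨c * κ, mul_pos hc hκ, ?_⟩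
  rw [TOat]
  have hbound : ∀ x : ℝ,
      (ENNReal.ofReal x * ν (Ici x)) / TOden ν x
        ≤ m⁻¹ * ((ENNReal.ofReal x * μ (Ici (x / c))) / TOden μ (x / c)) := by
    intro x
    rw [hνIci]
    calc (ENNReal.ofReal x * μ (Ici (x / c))) / TOden ν x
        ≤ (ENNReal.ofReal x * μ (Ici (x / c))) / (m * TOden μ (x / c)) :=
          ENNReal.div_le_div_left (hden_ge x) _
      _ = m⁻¹ * ((ENNReal.ofReal x * μ (Ici (x / c))) / TOden μ (x / c)) := by
          simp only [div_eq_mul_inv, ENNReal.mul_inv (Or.inl hm0) (Or.inl hmtop)]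
          ring
  calc (∫⁻ x in Ioi (c * κ), (ENNReal.ofReal x * ν (Ici x)) / TOden ν x)
      ≤ ∫⁻ x in Ioi (c * κ),
          m⁻¹ * ((ENNReal.ofReal x * μ (Ici (x / c))) / TOden μ (x / c)) :=
        lintegral_mono hbound
    _ = m⁻¹ * ∫⁻ x in Ioi (c * κ),
          (ENNReal.ofReal x * μ (Ici (x / c))) / TOden μ (x / c) :=
        lintegral_const_mul' _ _ (ENNReal.inv_ne_top.mpr hm0)
    _ = m⁻¹ * (ENNReal.ofReal c * ∫⁻ t in (fun t => c * t) ⁻¹' Ioi (c * κ),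
          (ENNReal.ofReal (c * t) * μ (Ici (c * t / c))) / TOden μ (c * t / c)) := by
        rw [← lintegral_scale c hc
          (fun x => (ENNReal.ofReal x * μ (Ici (x / c))) / TOden μ (x / c)) _ measurableSet_Ioi]
    _ = m⁻¹ * (ENNReal.ofReal c * ∫⁻ t in Ioi κ,
          ENNReal.ofReal c * ((ENNReal.ofReal t * μ (Ici t)) / TOden μ t)) := by
        rw [preimage_const_mul_Ioi₀ _ hc, mul_div_cancel_left₀ _ hc.ne']
        congr 2
        refine lintegral_congr fun t => ?_
        rw [mul_div_cancel_left₀ _ hc.ne', ENNReal.ofReal_mul hc.le, div_eq_mul_inv,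
          div_eq_mul_inv]
        ring
    _ = m⁻¹ * (ENNReal.ofReal c * (ENNReal.ofReal c *
          ∫⁻ t in Ioi κ, (ENNReal.ofReal t * μ (Ici t)) / TOden μ t)) := by
        rw [lintegral_const_mul' _ _ ENNReal.ofReal_ne_top]
    _ < ⊤ := by
        refine ENNReal.mul_lt_top (ENNReal.inv_lt_top.mpr (pos_iff_ne_zero.mpr hm0)) ?_
        exact ENNReal.mul_lt_top ENNReal.ofReal_lt_top
          (ENNReal.mul_lt_top ENNReal.ofReal_lt_top hTO)

/-- For a real random variable `X` and `c > 0`, the law of `X` satisfies (TO) iff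
the law of `c • X` satisfies (TO). -/
theorem TO_const_mul {Ω : Type*} [MeasurableSpace Ω] (P : Measure Ω)
    [IsProbabilityMeasure P] (X : Ω → ℝ) (hX : Measurable X) (c : ℝ) (hc : 0 < c) :
    TO (P.map X) ↔ TO (P.map fun ω => c * X ω) := by
  have hmap : P.map (fun ω => c * X ω) = (P.map X).map (fun x => c * x) :=
    (Measure.map_map (measurable_const_mul c) hX).symm
  constructor
  · intro h
    rw [hmap]
    exact TO_map_const_mul _ c hc h
  · intro h
    rw [hmap] at h
    have := TO_map_const_mul _ c⁻¹ (inv_pos.mpr hc) h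
    rw [Measure.map_map (measurable_const_mul c⁻¹) (measurable_const_mul c)] at this
    have heq : ((fun x : ℝ => c⁻¹ * x) ∘ fun x : ℝ => c * x) = id := by
      funext x
      simp [inv_mul_cancel_left₀ hc.ne']
    rwa [heq, Measure.map_id] at this
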